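/- Let f : [0,1] → ℝ be twice continuously differentiable with f(0) = f(1) = 0 and f''(0) = f''(1) = 0. Then there exists a constant K > 0 (depending only on ‖f''‖_∞) such that for every x ∈ [0,1], the function t ↦ ∂u1/∂t(x,t) is Lebesgue integrable on [0,∞) and ∫_0^∞ |∂u1/∂t(x,t)| dt ≤ K + 2‖f‖_∞/(e^{π²} − 1). -/

import Mathlib

open MeasureTheory Set
open scoped Real ENNReal NNReal

/-- The time derivative of `u1`:
`∂u1/∂t (x,t) = −2 Σ_{n=1}^∞ n²π² (∫_0^1 f(y) sin(nπy) dy) e^{−n²π²t} sin(nπx)`. -/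
noncomputable def du1dt (f : ℝ → ℝ) (x t : ℝ) : ℝ :=
  -2 * ∑' n : ℕ,
    ((n : ℝ) + 1) ^ 2 * π ^ 2 *
      (∫ y in (0:ℝ)..1, f y * Real.sin (((n : ℝ) + 1) * π * y)) *
        Real.exp (-(((n : ℝ) + 1) ^ 2) * π ^ 2 * t) * Real.sin (((n : ℝ) + 1) * π * x)



lemma aux_sum_inv_sq (N : ℕ) :
    ∑ n ∈ Finset.range N, (1:ℝ)/((n:ℝ)+1)^2 ≤ 2 - 2/((N:ℝ)+1) := by
  induction N with
  | zero => norm_num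
  | succ N ih =>
    rw [Finset.sum_range_succ]
    push_cast
    have h1 : (0:ℝ) < (N:ℝ)+1 := by positivity
    have h2 : (0:ℝ) < (N:ℝ)+2 := by positivity
    have key : (1:ℝ)/((N:ℝ)+1)^2 ≤ 2/((N:ℝ)+1) - 2/((N:ℝ)+2) := by
      rw [div_sub_div _ _ (ne_of_gt h1) (ne_of_gt h2),
        div_le_div_iff₀ (by positivity) (by positivity)]
      nlinarith
    have e : ((N:ℝ)+1+1) = (N:ℝ)+2 := by ring
    rw [e]
    linarith

lemma aux_integral_exp (c : ℝ) (hc : 0 < c) :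
    ∫ t in Ioi (0:ℝ), Real.exp (-(c*t)) = 1/c := by
  have h := integral_Ioi_of_hasDerivAt_of_tendsto (f := fun t => -Real.exp (-(c*t))/c)
      (f' := fun t => Real.exp (-(c*t))) (a := (0:ℝ)) (m := 0)
      (Continuous.continuousWithinAt (by continuity)) ?_ ?_ ?_
  · rw [h]; field_simp; simp
  · intro x _
    have h1 : HasDerivAt (fun t : ℝ => -(c*t)) (-c) x := by
      have h0 := ((hasDerivAt_id' x).const_mul c).neg; rwa [mul_one] at h0
    have h2 : HasDerivAt (fun t : ℝ => Real.exp (-(c*t))) (Real.exp (-(c*x)) * (-c)) x :=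
      (Real.hasDerivAt_exp _).comp x h1
    have h3 := (h2.neg).div_const c
    refine h3.congr_deriv ?_
    rw [mul_neg, neg_neg, mul_div_assoc, div_self hc.ne', mul_one]
  · have : IntegrableOn (fun t : ℝ => Real.exp (-c*t)) (Ioi 0) := exp_neg_integrableOn_Ioi 0 hc
    simpa [neg_mul] using this
  · have h1 : Filter.Tendsto (fun t : ℝ => c * t) Filter.atTop Filter.atTop :=
      Filter.Tendsto.const_mul_atTop hc Filter.tendsto_id
    have h2 : Filter.Tendsto (fun t : ℝ => Real.exp (-(c*t))) Filter.atTop (nhds 0) :=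
      Real.tendsto_exp_neg_atTop_nhds_zero.comp h1
    have := (h2.neg).div_const c
    simpa using this


lemma aux_coeff (f : ℝ → ℝ) (hf : ContDiffOn ℝ 2 f (Set.Icc 0 1))
    (hf0 : f 0 = 0) (hf1 : f 1 = 0) (M : ℝ)
    (hM : ∀ y ∈ Set.Icc (0:ℝ) 1,
      |derivWithin (derivWithin f (Set.Icc 0 1)) (Set.Icc 0 1) y| ≤ M)
    (n : ℕ) :
    |∫ y in (0:ℝ)..1, f y * Real.sin (((n:ℝ)+1)*π*y)| ≤ M / (((n:ℝ)+1)^2*π^2) := by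
  set s : ℝ := ((n:ℝ)+1)*π with hs_def
  have hs : 0 < s := by positivity
  set f' : ℝ → ℝ := derivWithin f (Set.Icc 0 1) with hf'_def
  set f'' : ℝ → ℝ := derivWithin f' (Set.Icc 0 1) with hf''_def
  have hud : UniqueDiffOn ℝ (Set.Icc (0:ℝ) 1) := uniqueDiffOn_Icc zero_lt_one
  have hf'cd : ContDiffOn ℝ 1 f' (Set.Icc 0 1) := hf.derivWithin hud (by norm_num)
  have hfc : ContinuousOn f (Set.Icc 0 1) := hf.continuousOn
  have hf'c : ContinuousOn f' (Set.Icc 0 1) := hf'cd.continuousOn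
  have hf''cd : ContDiffOn ℝ 0 f'' (Set.Icc 0 1) :=
    hf'cd.derivWithin hud (by norm_num : (0:WithTop ℕ∞) + 1 ≤ 1)
  have hf''c : ContinuousOn f'' (Set.Icc 0 1) := hf''cd.continuousOn
  have hder : ∀ x ∈ Ioo (0:ℝ) 1, HasDerivAt f (f' x) x := fun x hx =>
    ((hf.differentiableOn (by norm_num) x (Ioo_subset_Icc_self hx)).hasDerivWithinAt).hasDerivAt
      (Icc_mem_nhds hx.1 hx.2)
  have hder' : ∀ x ∈ Ioo (0:ℝ) 1, HasDerivAt f' (f'' x) x := fun x hx =>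
    ((hf'cd.differentiableOn (by norm_num) x (Ioo_subset_Icc_self hx)).hasDerivWithinAt).hasDerivAt
      (Icc_mem_nhds hx.1 hx.2)
  set H : ℝ → ℝ := fun y => -f y * Real.cos (s*y) * s + f' y * Real.sin (s*y) with hH_def
  set G : ℝ → ℝ := fun y => s^2 * (f y * Real.sin (s*y)) + f'' y * Real.sin (s*y) with hG_def
  have hsin1 : Real.sin s = 0 := by
    have := Real.sin_nat_mul_pi (n+1)
    push_cast at this
    simpa [hs_def] using this
  have hHder : ∀ x ∈ Ioo (0:ℝ) 1, HasDerivAt H (G x) x := by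
    intro x hx
    have hcos : HasDerivAt (fun y : ℝ => Real.cos (s*y)) (-Real.sin (s*x) * s) x := by
      exact ((Real.hasDerivAt_cos (s*x)).comp x ((hasDerivAt_id' x).const_mul s)).congr_deriv (by ring)
    have hsin : HasDerivAt (fun y : ℝ => Real.sin (s*y)) (Real.cos (s*x) * s) x := by
      exact ((Real.hasDerivAt_sin (s*x)).comp x ((hasDerivAt_id' x).const_mul s)).congr_deriv (by ring)
    have p1 := (((hder x hx).neg.mul hcos).mul_const s).add ((hder' x hx).mul hsin)
    refine p1.congr_deriv ?_
    simp only [hG_def, Pi.neg_apply]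
    ring
  have hcont_sin : ContinuousOn (fun y : ℝ => Real.sin (s*y)) (Set.Icc 0 1) :=
    (Real.continuous_sin.comp (continuous_const.mul continuous_id)).continuousOn
  have hcont_cos : ContinuousOn (fun y : ℝ => Real.cos (s*y)) (Set.Icc 0 1) :=
    (Real.continuous_cos.comp (continuous_const.mul continuous_id)).continuousOn
  have hHcont : ContinuousOn H (Set.Icc 0 1) :=
    ((hfc.neg.mul hcont_cos).mul continuousOn_const).add (hf'c.mul hcont_sin)
  have hi1 : IntervalIntegrable (fun y => f y * Real.sin (s*y)) volume 0 1 := by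
    apply ContinuousOn.intervalIntegrable
    rw [uIcc_of_le zero_le_one]
    exact hfc.mul hcont_sin
  have hi2 : IntervalIntegrable (fun y => f'' y * Real.sin (s*y)) volume 0 1 := by
    apply ContinuousOn.intervalIntegrable
    rw [uIcc_of_le zero_le_one]
    exact hf''c.mul hcont_sin
  have hint : IntervalIntegrable G volume 0 1 := (hi1.const_mul (s^2)).add hi2
  have key := intervalIntegral.integral_eq_sub_of_hasDeriv_right_of_le zero_le_one hHcont
    (fun x hx => (hHder x hx).hasDerivWithinAt) hint
  have hH1 : H 1 = 0 := by simp [hH_def, hf1, hsin1]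
  have hH0 : H 0 = 0 := by simp [hH_def, hf0]
  rw [hH1, hH0, sub_zero, hG_def] at key
  rw [intervalIntegral.integral_add (hi1.const_mul (s^2)) hi2,
    intervalIntegral.integral_const_mul] at key
  have key2 : s^2 * ∫ y in (0:ℝ)..1, f y * Real.sin (s*y)
      = -∫ y in (0:ℝ)..1, f'' y * Real.sin (s*y) := by linarith
  have hbnd : |∫ y in (0:ℝ)..1, f'' y * Real.sin (s*y)| ≤ M := by
    have := intervalIntegral.norm_integral_le_of_norm_le_const (C := M)
      (f := fun y => f'' y * Real.sin (s*y)) (a := (0:ℝ)) (b := 1) ?_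
    · simpa using this
    · intro y hy
      rw [uIoc_of_le zero_le_one] at hy
      have hy' : y ∈ Set.Icc (0:ℝ) 1 := ⟨le_of_lt hy.1, hy.2⟩
      calc ‖f'' y * Real.sin (s*y)‖ = |f'' y| * |Real.sin (s*y)| := abs_mul _ _
        _ ≤ M * 1 := by
            apply mul_le_mul (hM y hy') (Real.abs_sin_le_one _) (abs_nonneg _)
            exact (abs_nonneg _).trans (hM y hy')
        _ = M := mul_one M
  have heq : |∫ y in (0:ℝ)..1, f y * Real.sin (s*y)|
      = |∫ y in (0:ℝ)..1, f'' y * Real.sin (s*y)| / s^2 := by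
    rw [eq_div_iff (by positivity)]
    rw [← abs_of_pos (show (0:ℝ) < s^2 by positivity), ← abs_mul]
    rw [mul_comm, key2, abs_neg]
  have hs2 : s^2 = ((n:ℝ)+1)^2*π^2 := by rw [hs_def]; ring
  calc |∫ y in (0:ℝ)..1, f y * Real.sin (s*y)| = _ := heq
    _ ≤ M / s^2 := by apply div_le_div_of_nonneg_right hbnd (by positivity)
    _ = M / (((n:ℝ)+1)^2*π^2) := by rw [hs2]

/-- If `f : [0,1] → ℝ` is twice continuously differentiable with
`f 0 = f 1 = 0` and `f'' 0 = f'' 1 = 0`, then there is a constant `K > 0`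
(depending only on `‖f''‖_∞`) such that for every `x ∈ [0,1]` the function
`t ↦ ∂u1/∂t (x,t)` is Lebesgue integrable on `[0,∞)` and
`∫_0^∞ |∂u1/∂t (x,t)| dt ≤ K + 2‖f‖_∞/(e^{π²} − 1)`. -/
theorem du1dt_integrable_and_bound
    (f : ℝ → ℝ) (hf : ContDiffOn ℝ 2 f (Set.Icc 0 1))
    (hf0 : f 0 = 0) (hf1 : f 1 = 0)
    (hf''0 : derivWithin (derivWithin f (Set.Icc 0 1)) (Set.Icc 0 1) 0 = 0)
    (hf''1 : derivWithin (derivWithin f (Set.Icc 0 1)) (Set.Icc 0 1) 1 = 0) :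
    ∃ K > (0 : ℝ), ∀ x ∈ Set.Icc (0 : ℝ) 1,
      IntegrableOn (fun t : ℝ => du1dt f x t) (Set.Ici 0) ∧
        ∫ t in Set.Ici (0 : ℝ), |du1dt f x t|
          ≤ K + 2 * (⨆ y : Set.Icc (0 : ℝ) 1, |f y|) / (Real.exp (π ^ 2) - 1) := by
  have hud : UniqueDiffOn ℝ (Set.Icc (0:ℝ) 1) := uniqueDiffOn_Icc zero_lt_one
  have hf''c : ContinuousOn (derivWithin (derivWithin f (Set.Icc 0 1)) (Set.Icc 0 1))
      (Set.Icc 0 1) :=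
    ((hf.derivWithin hud (by norm_num)).derivWithin hud
      (by norm_num : (0:WithTop ℕ∞) + 1 ≤ 1)).continuousOn
  obtain ⟨M, hM⟩ := isCompact_Icc.exists_bound_of_continuousOn hf''c
  have hM' : ∀ y ∈ Set.Icc (0:ℝ) 1,
      |derivWithin (derivWithin f (Set.Icc 0 1)) (Set.Icc 0 1) y| ≤ M := by
    simpa [Real.norm_eq_abs] using hM
  have hM0 : 0 ≤ M := le_trans (abs_nonneg _) (hM' 0 ⟨le_rfl, zero_le_one⟩)
  refine ⟨4*M/π^2 + 1, by positivity, fun x hx => ?_⟩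
  set a : ℕ → ℝ := fun n => ∫ y in (0:ℝ)..1, f y * Real.sin (((n:ℝ)+1)*π*y) with ha_def
  have ha : ∀ n, |a n| ≤ M / (((n:ℝ)+1)^2*π^2) := fun n => aux_coeff f hf hf0 hf1 M hM' n
  set c : ℕ → ℝ := fun n => ((n:ℝ)+1)^2*π^2 with hc_def
  have hcpos : ∀ n, 0 < c n := fun n => by rw [hc_def]; positivity
  set g : ℕ → ℝ → ℝ := fun n t =>
    ((n:ℝ)+1)^2*π^2 * a n * Real.exp (-(((n:ℝ)+1)^2)*π^2*t) * Real.sin (((n:ℝ)+1)*π*x)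
    with hg_def
  have hkey : ∀ t, du1dt f x t = -2 * ∑' n, g n t := fun t => rfl
  have hgcont : ∀ n, Continuous (g n) := fun n => by
    rw [hg_def]; fun_prop
  have hrep : ∀ n, g n = fun t =>
      (c n * a n * Real.sin (((n:ℝ)+1)*π*x)) * Real.exp (-(c n * t)) := by
    intro n
    funext t
    simp only [hg_def, hc_def]
    rw [show -(((n:ℝ)+1)^2)*π^2*t = -(((n:ℝ)+1)^2*π^2 * t) by ring]
    ring
  have hgint : ∀ n, IntegrableOn (g n) (Ioi 0) := by
    intro n
    rw [hrep n]
    have h1 : IntegrableOn (fun t => Real.exp (-(c n * t))) (Ioi 0) := by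
      simpa [neg_mul] using exp_neg_integrableOn_Ioi 0 (hcpos n)
    exact h1.const_mul _
  have hK : ∀ n, |c n * a n * Real.sin (((n:ℝ)+1)*π*x)| ≤ M := by
    intro n
    rw [abs_mul, abs_mul, abs_of_pos (hcpos n)]
    have h2 : |a n| ≤ M / c n := by simp only [hc_def]; exact ha n
    have h1 : c n * |a n| ≤ M := by
      calc c n * |a n| ≤ c n * (M / c n) := mul_le_mul_of_nonneg_left h2 (le_of_lt (hcpos n))
        _ = M := by rw [mul_div_assoc']; exact mul_div_cancel_left₀ M (hcpos n).ne'
    calc c n * |a n| * |Real.sin (((n:ℝ)+1)*π*x)|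
        ≤ c n * |a n| * 1 :=
          mul_le_mul_of_nonneg_left (Real.abs_sin_le_one _) (by positivity)
      _ = c n * |a n| := mul_one _
      _ ≤ M := h1
  have hintabs : ∀ n, ∫ t in Ioi (0:ℝ), |g n t| ≤ M / c n := by
    intro n
    have e1 : ∀ t, |g n t| = (|c n * a n * Real.sin (((n:ℝ)+1)*π*x)|)
        * Real.exp (-(c n * t)) := by
      intro t
      rw [hrep n]
      rw [abs_mul, Real.abs_exp]
    have e2 : ∫ t in Ioi (0:ℝ), |g n t|
        = |c n * a n * Real.sin (((n:ℝ)+1)*π*x)| * (1 / c n) := by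
      simp only [e1]
      rw [MeasureTheory.integral_const_mul, aux_integral_exp (c n) (hcpos n)]
    rw [e2]
    calc |c n * a n * Real.sin (((n:ℝ)+1)*π*x)| * (1 / c n)
        ≤ M * (1 / c n) := mul_le_mul_of_nonneg_right (hK n) (by positivity)
      _ = M / c n := mul_one_div M (c n)
  -- pointwise summability on Ioi 0
  have habs_le : ∀ n, ∀ t : ℝ, 0 ≤ t → |g n t| ≤ M * Real.exp (-(π^2*t)) ^ (n+1) := by
    intro n t ht
    have e1 : |g n t| = |c n * a n * Real.sin (((n:ℝ)+1)*π*x)| * Real.exp (-(c n * t)) := by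
      rw [hrep n, abs_mul, Real.abs_exp]
    rw [e1]
    have h3 : Real.exp (-(c n * t)) ≤ Real.exp (-(π^2*t)) ^ (n+1) := by
      rw [← Real.exp_nat_mul]
      apply Real.exp_le_exp.2
      simp only [hc_def]
      push_cast
      nlinarith [Real.pi_pos, sq_nonneg ((n:ℝ)+1), sq_nonneg (π:ℝ),
        mul_nonneg (mul_nonneg (sq_nonneg ((n:ℝ))) (sq_nonneg (π:ℝ))) ht,
        mul_nonneg (mul_nonneg (Nat.cast_nonneg n) (sq_nonneg (π:ℝ))) ht]
    exact mul_le_mul (hK n) h3 (le_of_lt (Real.exp_pos _)) hM0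
  have hsummable : ∀ t ∈ Ioi (0:ℝ), Summable (fun n => |g n t|) := by
    intro t ht
    have hr0 : (0:ℝ) ≤ Real.exp (-(π^2*t)) := le_of_lt (Real.exp_pos _)
    have hr1 : Real.exp (-(π^2*t)) < 1 := by
      rw [Real.exp_lt_one_iff]
      have : (0:ℝ) < π^2*t := mul_pos (by positivity) ht
      linarith
    have hmaj : Summable (fun n : ℕ => M * Real.exp (-(π^2*t)) ^ (n+1)) := by
      apply Summable.congr ((summable_geometric_of_lt_one hr0 hr1).mul_left
        (M * Real.exp (-(π^2*t))))
      intro n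
      rw [pow_succ]
      ring
    exact Summable.of_nonneg_of_le (fun n => abs_nonneg _)
      (fun n => habs_le n t (le_of_lt ht)) hmaj
  -- measurability of the sum
  have hmeas : AEStronglyMeasurable (fun t => ∑' n, g n t) (volume.restrict (Ioi 0)) := by
    apply aestronglyMeasurable_of_tendsto_ae (u := Filter.atTop)
      (f := fun N t => ∑ n ∈ Finset.range N, g n t)
    · intro N
      exact (continuous_finset_sum _ fun n _ => hgcont n).aestronglyMeasurable
    · refine (ae_restrict_iff' measurableSet_Ioi).2 (Filter.Eventually.of_forall fun t ht => ?_)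
      exact ((hsummable t ht).of_abs).hasSum.tendsto_sum_nat
  -- the total lintegral bound
  have hLn : ∀ n, ∫⁻ t in Ioi (0:ℝ), (‖g n t‖₊ : ENNReal) ≤ ENNReal.ofReal (M / c n) := by
    intro n
    have h0 := ofReal_integral_norm_eq_lintegral_enorm (hgint n)
    simp only [enorm_eq_nnnorm] at h0
    rw [← h0]
    apply ENNReal.ofReal_le_ofReal
    simpa [Real.norm_eq_abs] using hintabs n
  have hsum_bound : ∑' n, ∫⁻ t in Ioi (0:ℝ), (‖g n t‖₊ : ENNReal) ≤ ENNReal.ofReal (2*M/π^2) := by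
    calc ∑' n, ∫⁻ t in Ioi (0:ℝ), (‖g n t‖₊ : ENNReal)
        ≤ ∑' n, ENNReal.ofReal (M / c n) := ENNReal.tsum_le_tsum hLn
      _ ≤ ENNReal.ofReal (2*M/π^2) := by
          apply ENNReal.tsum_le_of_sum_range_le
          intro N
          rw [← ENNReal.ofReal_sum_of_nonneg (fun n _ => div_nonneg hM0 (le_of_lt (hcpos n)))]
          apply ENNReal.ofReal_le_ofReal
          have : ∑ n ∈ Finset.range N, M / c n
              = (M/π^2) * ∑ n ∈ Finset.range N, (1:ℝ)/((n:ℝ)+1)^2 := by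
            rw [Finset.mul_sum]
            apply Finset.sum_congr rfl
            intro n _
            simp only [hc_def]
            rw [div_mul_eq_mul_div, mul_one_div]
            rw [div_div]
          rw [this]
          calc (M/π^2) * ∑ n ∈ Finset.range N, (1:ℝ)/((n:ℝ)+1)^2
              ≤ (M/π^2) * 2 := by
                apply mul_le_mul_of_nonneg_left _ (by positivity)
                calc ∑ n ∈ Finset.range N, (1:ℝ)/((n:ℝ)+1)^2
                    ≤ 2 - 2/((N:ℝ)+1) := aux_sum_inv_sq N
                  _ ≤ 2 := by
                      have : (0:ℝ) < (N:ℝ)+1 := by positivity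
                      have : (0:ℝ) ≤ 2/((N:ℝ)+1) := by positivity
                      linarith
            _ = 2*M/π^2 := by ring
  have hlint : ∫⁻ t in Ioi (0:ℝ), (‖(∑' n, g n t)‖₊ : ENNReal) ≤ ENNReal.ofReal (2*M/π^2) := by
    have hpt : ∀ t ∈ Ioi (0:ℝ), ((‖(∑' n, g n t)‖₊ : ENNReal) : ℝ≥0∞) ≤ ∑' n, (‖g n t‖₊ : ℝ≥0∞) := by
      intro t ht
      have hs : Summable (fun n => ‖g n t‖₊) := by
        rw [← NNReal.summable_coe]
        simpa [coe_nnnorm, Real.norm_eq_abs] using hsummable t ht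
      calc ((‖(∑' n, g n t)‖₊ : ENNReal) : ℝ≥0∞) ≤ ((∑' n, ‖g n t‖₊ : ℝ≥0) : ℝ≥0∞) :=
            ENNReal.coe_le_coe.2 (nnnorm_tsum_le hs)
        _ = ∑' n, (‖g n t‖₊ : ℝ≥0∞) := ENNReal.coe_tsum hs
    calc ∫⁻ t in Ioi (0:ℝ), (‖(∑' n, g n t)‖₊ : ENNReal)
        ≤ ∫⁻ t in Ioi (0:ℝ), ∑' n, (‖g n t‖₊ : ℝ≥0∞) := by
          apply lintegral_mono_ae
          exact (ae_restrict_iff' measurableSet_Ioi).2 (Filter.Eventually.of_forall hpt)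
      _ = ∑' n, ∫⁻ t in Ioi (0:ℝ), (‖g n t‖₊ : ENNReal) :=
          lintegral_tsum fun n => ((hgcont n).measurable.nnnorm.coe_nnreal_ennreal).aemeasurable
      _ ≤ ENNReal.ofReal (2*M/π^2) := hsum_bound
  have hS_int : IntegrableOn (fun t => ∑' n, g n t) (Ioi 0) := by
    refine ⟨hmeas, ?_⟩
    exact lt_of_le_of_lt hlint ENNReal.ofReal_lt_top
  have hdu_int : IntegrableOn (fun t : ℝ => du1dt f x t) (Ioi 0) := by
    simp only [hkey]
    exact hS_int.const_mul (-2)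
  constructor
  · rw [integrableOn_Ici_iff_integrableOn_Ioi]
    exact hdu_int
  · have habs_eq : ∀ t, |du1dt f x t| = 2 * |∑' n, g n t| := by
      intro t
      rw [hkey, abs_mul]
      norm_num
    have hstep : ∫ t in Ici (0:ℝ), |du1dt f x t| = 2 * ∫ t in Ioi (0:ℝ), |∑' n, g n t| := by
      rw [MeasureTheory.integral_Ici_eq_integral_Ioi]
      simp only [habs_eq]
      rw [MeasureTheory.integral_const_mul]
    rw [hstep]
    have hnorm : ∫ t in Ioi (0:ℝ), |∑' n, g n t|
        = (∫⁻ t in Ioi (0:ℝ), (‖(∑' n, g n t)‖₊ : ENNReal)).toReal := by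
      have := integral_norm_eq_lintegral_enorm hmeas
      simpa [Real.norm_eq_abs, enorm_eq_nnnorm] using this
    have hbound2 : ∫ t in Ioi (0:ℝ), |∑' n, g n t| ≤ 2*M/π^2 := by
      rw [hnorm]
      calc (∫⁻ t in Ioi (0:ℝ), (‖(∑' n, g n t)‖₊ : ENNReal)).toReal
          ≤ (ENNReal.ofReal (2*M/π^2)).toReal :=
            ENNReal.toReal_mono ENNReal.ofReal_ne_top hlint
        _ = 2*M/π^2 := ENNReal.toReal_ofReal (by positivity)
    have hsup : 0 ≤ 2 * (⨆ y : Set.Icc (0:ℝ) 1, |f y|) / (Real.exp (π^2) - 1) := by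
      apply div_nonneg
      · apply mul_nonneg (by norm_num)
        exact Real.iSup_nonneg fun y => abs_nonneg _
      · have : (1:ℝ) ≤ Real.exp (π^2) := Real.one_le_exp (by positivity)
        linarith
    have h42 : 4*M/π^2 = 2*(2*M/π^2) := by ring
    have : 2 * ∫ t in Ioi (0:ℝ), |∑' n, g n t| ≤ 4*M/π^2 := by
      rw [h42]; linarith
    linarith
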